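/- Let 0 < β < 1/4 and let v(t) = t^{−β} for 0 < t < 1. Then v ∈ H^β(0,1), i.e., the Gagliardo seminorm ∫_0^1 ∫_0^1 |v(s) − v(t)|² / |s−t|^{1+2β} ds dt is finite. -/

import Mathlib

open MeasureTheory Real Set
open scoped ENNReal

-- base integral finite
lemma baseInt (c : ℝ) (hc : c < 1) :
    ∫⁻ u in Set.Ioo (0:ℝ) 1, ENNReal.ofReal (u ^ (-c)) < ⊤ := by
  have h : IntervalIntegrable (fun x : ℝ => x ^ (-c)) volume 0 1 :=
    intervalIntegral.intervalIntegrable_rpow' (by linarith)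
  have h2 : IntegrableOn (fun x : ℝ => x ^ (-c)) (Set.Ioo 0 1) volume := by
    have := (intervalIntegrable_iff_integrableOn_Ioc_of_le (by norm_num : (0:ℝ) ≤ 1)).1 h
    exact this.mono_set Set.Ioo_subset_Ioc_self
  exact h2.lintegral_lt_top

lemma innerBound (c : ℝ) {s : ℝ} (hs : s ∈ Set.Ioo (0:ℝ) 1) :
    ∫⁻ t in Set.Ioo (0:ℝ) 1, ENNReal.ofReal (|s - t| ^ (-c)) ≤
      2 * ∫⁻ u in Set.Ioo (0:ℝ) 1, ENNReal.ofReal (u ^ (-c)) := by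
  obtain ⟨hs0, hs1⟩ := hs
  set h : ℝ → ℝ≥0∞ := fun u => ENNReal.ofReal (|u| ^ (-c)) with hh
  have hmeas : Measurable h := (measurable_id.abs.pow measurable_const).ennreal_ofReal
  have habs : ∀ u : ℝ, h (-u) = h u := by intro u; simp [hh, abs_neg]
  have base : ∀ {A : Set ℝ}, A = Set.Ioo (0:ℝ) 1 → ∫⁻ u in A, h u =
      ∫⁻ u in Set.Ioo (0:ℝ) 1, ENNReal.ofReal (u ^ (-c)) := by
    rintro A rfl
    refine setLIntegral_congr_fun measurableSet_Ioo (fun u hu => ?_)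
    simp only [hh]; rw [abs_of_pos hu.1]
  -- step 1: enlarge domain and translate
  have step1 : ∫⁻ t in Set.Ioo (0:ℝ) 1, ENNReal.ofReal (|s - t| ^ (-c)) ≤
      ∫⁻ u in Set.Ioo (-1:ℝ) 1, h u := by
    have hsub : Set.Ioo (0:ℝ) 1 ⊆ Set.Ioo (s-1) (s+1) := by
      intro x hx; exact ⟨by linarith [hx.1], by linarith [hx.2]⟩
    calc ∫⁻ t in Set.Ioo (0:ℝ) 1, ENNReal.ofReal (|s - t| ^ (-c))
        ≤ ∫⁻ t in Set.Ioo (s-1) (s+1), ENNReal.ofReal (|s - t| ^ (-c)) :=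
          lintegral_mono_set hsub
      _ = ∫⁻ t, (Set.Ioo (s-1) (s+1)).indicator (fun t => ENNReal.ofReal (|s - t| ^ (-c))) t := by
          rw [lintegral_indicator measurableSet_Ioo]
      _ = ∫⁻ u, (Set.Ioo (s-1) (s+1)).indicator (fun t => ENNReal.ofReal (|s - t| ^ (-c))) (u + s) :=
          (lintegral_add_right_eq_self _ s).symm
      _ = ∫⁻ u, (Set.Ioo (-1:ℝ) 1).indicator h u := by
          congr 1; funext u
          by_cases hu : u ∈ Set.Ioo (-1:ℝ) 1
          · have hu' : u + s ∈ Set.Ioo (s-1) (s+1) := ⟨by linarith [hu.1], by linarith [hu.2]⟩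
            rw [Set.indicator_of_mem hu', Set.indicator_of_mem hu]
            have : s - (u + s) = -u := by ring
            rw [this, hh]; simp [abs_neg]
          · have hu' : u + s ∉ Set.Ioo (s-1) (s+1) := by
              simp only [Set.mem_Ioo] at hu ⊢
              intro h1; exact hu ⟨by linarith [h1.1], by linarith [h1.2]⟩
            rw [Set.indicator_of_notMem hu', Set.indicator_of_notMem hu]
      _ = ∫⁻ u in Set.Ioo (-1:ℝ) 1, h u := lintegral_indicator measurableSet_Ioo _
  -- step 2: split and reflect
  have split : Set.Ioo (-1:ℝ) 1 ⊆ Set.Ioo (-1:ℝ) 0 ∪ Set.Ico (0:ℝ) 1 := by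
    intro x hx
    rcases lt_or_ge x 0 with hx0 | hx0
    · exact Or.inl ⟨hx.1, hx0⟩
    · exact Or.inr ⟨hx0, hx.2⟩
  have hIco : ∫⁻ u in Set.Ico (0:ℝ) 1, h u = ∫⁻ u in Set.Ioo (0:ℝ) 1, h u := by
    rw [Measure.restrict_congr_set Ioo_ae_eq_Ico.symm]
  have hrefl : ∫⁻ u in Set.Ioo (-1:ℝ) 0, h u = ∫⁻ u in Set.Ioo (0:ℝ) 1, h u := by
    have key : ∫⁻ u, (Set.Ioo (-1:ℝ) 0).indicator h (-u) = ∫⁻ u, (Set.Ioo (-1:ℝ) 0).indicator h u :=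
      (Measure.measurePreserving_neg (volume : Measure ℝ)).lintegral_comp
        (hmeas.indicator measurableSet_Ioo)
    calc ∫⁻ u in Set.Ioo (-1:ℝ) 0, h u
        = ∫⁻ u, (Set.Ioo (-1:ℝ) 0).indicator h u := (lintegral_indicator measurableSet_Ioo _).symm
      _ = ∫⁻ u, (Set.Ioo (-1:ℝ) 0).indicator h (-u) := key.symm
      _ = ∫⁻ u, (Set.Ioo (0:ℝ) 1).indicator h u := by
          congr 1; funext u
          by_cases hu : u ∈ Set.Ioo (0:ℝ) 1
          · have hu' : -u ∈ Set.Ioo (-1:ℝ) 0 := ⟨by linarith [hu.2], by linarith [hu.1]⟩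
            rw [Set.indicator_of_mem hu', Set.indicator_of_mem hu, habs]
          · have hu' : -u ∉ Set.Ioo (-1:ℝ) 0 := by
              simp only [Set.mem_Ioo] at hu ⊢
              intro h1; exact hu ⟨by linarith [h1.2], by linarith [h1.1]⟩
            rw [Set.indicator_of_notMem hu', Set.indicator_of_notMem hu]
      _ = ∫⁻ u in Set.Ioo (0:ℝ) 1, h u := lintegral_indicator measurableSet_Ioo _
  calc ∫⁻ t in Set.Ioo (0:ℝ) 1, ENNReal.ofReal (|s - t| ^ (-c))
      ≤ ∫⁻ u in Set.Ioo (-1:ℝ) 1, h u := step1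
    _ ≤ ∫⁻ u in (Set.Ioo (-1:ℝ) 0 ∪ Set.Ico (0:ℝ) 1), h u := lintegral_mono_set split
    _ ≤ (∫⁻ u in Set.Ioo (-1:ℝ) 0, h u) + ∫⁻ u in Set.Ico (0:ℝ) 1, h u := lintegral_union_le _ _ _
    _ = (∫⁻ u in Set.Ioo (0:ℝ) 1, h u) + ∫⁻ u in Set.Ioo (0:ℝ) 1, h u := by rw [hIco, hrefl]
    _ = 2 * ∫⁻ u in Set.Ioo (0:ℝ) 1, h u := (two_mul _).symm
    _ = 2 * ∫⁻ u in Set.Ioo (0:ℝ) 1, ENNReal.ofReal (u ^ (-c)) := by rw [base rfl]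

lemma ptReal (β : ℝ) (hβ0 : 0 < β) (hβ : β < 1/4) {t s : ℝ} (ht : 0 < t) (hlt : t < s) :
    (t ^ (-β) - s ^ (-β)) ^ 2 / (s - t) ^ (1 + 2*β) ≤
      t ^ (-(2*β + 1/2)) * (s - t) ^ (-(2*β + 1/2)) := by
  have hs : 0 < s := ht.trans hlt
  set d := s - t with hd'
  have hd : 0 < d := by simp [hd']; linarith
  set a := t ^ (-β) - s ^ (-β) with ha'
  have ha0 : 0 ≤ a := by
    have := rpow_le_rpow_of_nonpos ht hlt.le (neg_nonpos.2 hβ0.le)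
    simp [ha']; linarith
  have haX : a ≤ t ^ (-β) := by
    have : 0 ≤ s ^ (-β) := rpow_nonneg hs.le _
    simp [ha']; linarith
  -- derivative bound
  have haY : a ≤ d * t ^ (-β - 1) := by
    have hC : ∀ x ∈ Set.Icc t s, ‖-β * x ^ (-β - 1)‖ ≤ β * t ^ (-β - 1) := by
      intro x hx
      have hx0 : 0 < x := lt_of_lt_of_le ht hx.1
      have h1 : x ^ (-β - 1) ≤ t ^ (-β - 1) :=
        rpow_le_rpow_of_nonpos ht hx.1 (by linarith)
      have h2 : 0 ≤ x ^ (-β - 1) := rpow_nonneg hx0.le _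
      rw [norm_mul, norm_neg, Real.norm_eq_abs, Real.norm_eq_abs,
        abs_of_pos hβ0, abs_of_nonneg h2]
      exact mul_le_mul_of_nonneg_left h1 hβ0.le
    have hderiv : ∀ x ∈ Set.Icc t s, HasDerivWithinAt (fun y : ℝ => y ^ (-β))
        (-β * x ^ (-β - 1)) (Set.Icc t s) x := by
      intro x hx
      have hx0 : x ≠ 0 := ne_of_gt (lt_of_lt_of_le ht hx.1)
      have := (Real.hasDerivAt_rpow_const (p := -β) (Or.inl hx0)).hasDerivWithinAt
        (s := Set.Icc t s)
      simpa using this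
    have key := Convex.norm_image_sub_le_of_norm_hasDerivWithin_le hderiv hC
      (convex_Icc t s) (Set.left_mem_Icc.2 hlt.le) (Set.right_mem_Icc.2 hlt.le)
    rw [Real.norm_eq_abs, Real.norm_eq_abs] at key
    have habs : |s ^ (-β) - t ^ (-β)| = a := by
      rw [abs_sub_comm]; exact abs_of_nonneg ha0
    rw [habs, abs_of_pos (by linarith : (0:ℝ) < s - t)] at key
    have htp : 0 ≤ t ^ (-β - 1) := rpow_nonneg ht.le _
    have h1 : (1 - β) * t ^ (-β - 1) * (s - t) ≥ 0 :=
      mul_nonneg (mul_nonneg (by linarith) htp) (by linarith)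
    have hdd : d = s - t := hd'
    nlinarith [key, h1, hdd]
  -- interpolation
  rcases eq_or_lt_of_le ha0 with hz | ha
  · rw [← hz]
    simp only [ne_eq, OfNat.ofNat_ne_zero, not_false_eq_true, zero_pow, zero_div]
    positivity
  · have e1 : a ^ 2 = a ^ ((3/2:ℝ)) * a ^ ((1/2:ℝ)) := by
      rw [← Real.rpow_add ha]
      norm_num
    have b1 : a ^ ((3/2:ℝ)) ≤ (t ^ (-β)) ^ ((3/2:ℝ)) := Real.rpow_le_rpow ha0 haX (by norm_num)
    have b2 : a ^ ((1/2:ℝ)) ≤ (d * t ^ (-β-1)) ^ ((1/2:ℝ)) := Real.rpow_le_rpow ha0 haY (by norm_num)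
    have prod : a ^ 2 ≤ (t ^ (-β)) ^ ((3/2:ℝ)) * (d * t ^ (-β-1)) ^ ((1/2:ℝ)) := by
      rw [e1]
      exact mul_le_mul b1 b2 (rpow_nonneg ha0 _) (rpow_nonneg (rpow_nonneg ht.le _) _)
    have simp1 : (t ^ (-β)) ^ ((3/2:ℝ)) * (d * t ^ (-β-1)) ^ ((1/2:ℝ))
        = d ^ ((1/2:ℝ)) * t ^ (-(2*β + 1/2)) := by
      rw [Real.mul_rpow hd.le (rpow_nonneg ht.le _), ← Real.rpow_mul ht.le,
        ← Real.rpow_mul ht.le, mul_comm (d ^ ((1/2:ℝ))) _, ← mul_assoc, ← Real.rpow_add ht,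
        mul_comm]
      congr 1
      ring_nf
    have hdenom : (0:ℝ) < d ^ (1 + 2*β) := rpow_pos_of_pos hd _
    have step : a ^ 2 / d ^ (1 + 2*β) ≤ (d ^ ((1/2:ℝ)) * t ^ (-(2*β + 1/2))) / d ^ (1 + 2*β) := by
      apply div_le_div_of_nonneg_right ?_ hdenom.le
      rw [← simp1]; exact prod
    have simp2 : (d ^ ((1/2:ℝ)) * t ^ (-(2*β + 1/2))) / d ^ (1 + 2*β)
        = t ^ (-(2*β + 1/2)) * d ^ (-(2*β + 1/2)) := by
      rw [mul_comm, mul_div_assoc, ← Real.rpow_sub hd]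
      congr 1
      ring_nf
    rw [simp2] at step
    exact step

lemma ptBound (β : ℝ) (hβ0 : 0 < β) (hβ : β < 1/4) {s t : ℝ}
    (hs : s ∈ Set.Ioo (0:ℝ) 1) (ht : t ∈ Set.Ioo (0:ℝ) 1) :
    ENNReal.ofReal ((s ^ (-β) - t ^ (-β)) ^ 2 / |s - t| ^ (1 + 2 * β)) ≤
      ENNReal.ofReal (s ^ (-(2*β + 1/2))) * ENNReal.ofReal (|s - t| ^ (-(2*β + 1/2))) +
      ENNReal.ofReal (t ^ (-(2*β + 1/2))) * ENNReal.ofReal (|s - t| ^ (-(2*β + 1/2))) := by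
  rcases lt_trichotomy s t with hlt | heq | hlt
  · -- s < t : use ptReal with roles (t := s, s := t)
    have key := ptReal β hβ0 hβ hs.1 hlt
    have habs : |s - t| = t - s := by rw [abs_sub_comm]; exact abs_of_pos (by linarith)
    calc ENNReal.ofReal ((s ^ (-β) - t ^ (-β)) ^ 2 / |s - t| ^ (1 + 2 * β))
        ≤ ENNReal.ofReal (s ^ (-(2*β + 1/2)) * |s - t| ^ (-(2*β + 1/2))) := by
          apply ENNReal.ofReal_le_ofReal
          rw [habs]
          exact key
      _ = ENNReal.ofReal (s ^ (-(2*β + 1/2))) * ENNReal.ofReal (|s - t| ^ (-(2*β + 1/2))) :=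
          ENNReal.ofReal_mul (rpow_nonneg hs.1.le _)
      _ ≤ _ := le_self_add
  · subst heq
    simp
  · -- t < s
    have key := ptReal β hβ0 hβ ht.1 hlt
    have habs : |s - t| = s - t := abs_of_pos (by linarith)
    have hsq : (s ^ (-β) - t ^ (-β)) ^ 2 = (t ^ (-β) - s ^ (-β)) ^ 2 := by ring
    calc ENNReal.ofReal ((s ^ (-β) - t ^ (-β)) ^ 2 / |s - t| ^ (1 + 2 * β))
        ≤ ENNReal.ofReal (t ^ (-(2*β + 1/2)) * |s - t| ^ (-(2*β + 1/2))) := by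
          apply ENNReal.ofReal_le_ofReal
          rw [habs, hsq]
          exact key
      _ = ENNReal.ofReal (t ^ (-(2*β + 1/2))) * ENNReal.ofReal (|s - t| ^ (-(2*β + 1/2))) :=
          ENNReal.ofReal_mul (rpow_nonneg ht.1.le _)
      _ ≤ _ := le_add_self

/-- The function `t ↦ t^{-β}` belongs to `H^β(0,1)` for `0 < β < 1/4`:
its Gagliardo seminorm is finite. -/
theorem stmt8 (β : ℝ) (hβ0 : 0 < β) (hβ : β < 1/4) :
    ∫⁻ s in Set.Ioo (0:ℝ) 1, ∫⁻ t in Set.Ioo (0:ℝ) 1,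
      ENNReal.ofReal ((s ^ (-β) - t ^ (-β)) ^ 2 / |s - t| ^ (1 + 2 * β)) < ⊤ := by
  set p : ℝ := 2*β + 1/2 with hp'
  have hp1 : p < 1 := by rw [hp']; linarith
  set I : ℝ≥0∞ := ∫⁻ u in Set.Ioo (0:ℝ) 1, ENNReal.ofReal (u ^ (-p)) with hI'
  have hI : I < ⊤ := baseInt p hp1
  -- measurability helpers
  have m1 : Measurable fun q : ℝ × ℝ =>
      ENNReal.ofReal (q.2 ^ (-p)) * ENNReal.ofReal (|q.1 - q.2| ^ (-p)) := by
    apply Measurable.mul (f := fun q : ℝ × ℝ => ENNReal.ofReal (q.2 ^ (-p)))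
      (g := fun q : ℝ × ℝ => ENNReal.ofReal (|q.1 - q.2| ^ (-p)))
    · exact (measurable_snd.pow measurable_const).ennreal_ofReal
    · exact (((measurable_fst.sub measurable_snd).abs).pow measurable_const).ennreal_ofReal
  -- Term bounds
  have termA : (∫⁻ s in Set.Ioo (0:ℝ) 1, ∫⁻ t in Set.Ioo (0:ℝ) 1,
      ENNReal.ofReal (s ^ (-p)) * ENNReal.ofReal (|s - t| ^ (-p))) ≤ I * (2 * I) := by
    calc ∫⁻ s in Set.Ioo (0:ℝ) 1, ∫⁻ t in Set.Ioo (0:ℝ) 1,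
          ENNReal.ofReal (s ^ (-p)) * ENNReal.ofReal (|s - t| ^ (-p))
        ≤ ∫⁻ s in Set.Ioo (0:ℝ) 1, ENNReal.ofReal (s ^ (-p)) * (2 * I) := by
          apply lintegral_mono_ae
          filter_upwards [ae_restrict_mem measurableSet_Ioo] with s hs
          rw [lintegral_const_mul' _ _ ENNReal.ofReal_ne_top]
          exact mul_le_mul_right (innerBound p hs) _
      _ = I * (2 * I) := by
          rw [lintegral_mul_const' _ _ (by finiteness)]
  have termB : (∫⁻ s in Set.Ioo (0:ℝ) 1, ∫⁻ t in Set.Ioo (0:ℝ) 1,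
      ENNReal.ofReal (t ^ (-p)) * ENNReal.ofReal (|s - t| ^ (-p))) ≤ I * (2 * I) := by
    rw [lintegral_lintegral_swap m1.aemeasurable]
    calc ∫⁻ t in Set.Ioo (0:ℝ) 1, ∫⁻ s in Set.Ioo (0:ℝ) 1,
          ENNReal.ofReal (t ^ (-p)) * ENNReal.ofReal (|s - t| ^ (-p))
        ≤ ∫⁻ t in Set.Ioo (0:ℝ) 1, ENNReal.ofReal (t ^ (-p)) * (2 * I) := by
          apply lintegral_mono_ae
          filter_upwards [ae_restrict_mem measurableSet_Ioo] with t ht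
          rw [lintegral_const_mul' _ _ ENNReal.ofReal_ne_top]
          have : (∫⁻ s in Set.Ioo (0:ℝ) 1, ENNReal.ofReal (|s - t| ^ (-p)))
              = ∫⁻ s in Set.Ioo (0:ℝ) 1, ENNReal.ofReal (|t - s| ^ (-p)) := by
            apply setLIntegral_congr_fun measurableSet_Ioo
            exact fun s _ => by rw [abs_sub_comm]
          rw [this]
          exact mul_le_mul_right (innerBound p ht) _
      _ = I * (2 * I) := by
          rw [lintegral_mul_const' _ _ (by finiteness)]
  -- main estimate
  have main : (∫⁻ s in Set.Ioo (0:ℝ) 1, ∫⁻ t in Set.Ioo (0:ℝ) 1,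
      ENNReal.ofReal ((s ^ (-β) - t ^ (-β)) ^ 2 / |s - t| ^ (1 + 2 * β))) ≤
      (∫⁻ s in Set.Ioo (0:ℝ) 1, ∫⁻ t in Set.Ioo (0:ℝ) 1,
        ENNReal.ofReal (s ^ (-p)) * ENNReal.ofReal (|s - t| ^ (-p))) +
      (∫⁻ s in Set.Ioo (0:ℝ) 1, ∫⁻ t in Set.Ioo (0:ℝ) 1,
        ENNReal.ofReal (t ^ (-p)) * ENNReal.ofReal (|s - t| ^ (-p))) := by
    have measInner : ∀ s : ℝ, Measurable fun t : ℝ =>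
        ENNReal.ofReal (s ^ (-p)) * ENNReal.ofReal (|s - t| ^ (-p)) := fun s =>
      measurable_const.mul
        ((((measurable_const.sub measurable_id).abs).pow measurable_const).ennreal_ofReal)
    have measOuter : Measurable fun s : ℝ =>
        ∫⁻ t in Set.Ioo (0:ℝ) 1, ENNReal.ofReal (s ^ (-p)) * ENNReal.ofReal (|s - t| ^ (-p)) := by
      apply Measurable.lintegral_prod_right (f := fun s t =>
        ENNReal.ofReal (s ^ (-p)) * ENNReal.ofReal (|s - t| ^ (-p)))
      exact ((measurable_fst.pow measurable_const).ennreal_ofReal).mul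
        ((((measurable_fst.sub measurable_snd).abs).pow measurable_const).ennreal_ofReal)
    rw [← lintegral_add_left measOuter]
    apply lintegral_mono_ae
    filter_upwards [ae_restrict_mem measurableSet_Ioo] with s hs
    rw [← lintegral_add_left (measInner s)]
    apply lintegral_mono_ae
    filter_upwards [ae_restrict_mem measurableSet_Ioo] with t ht
    exact ptBound β hβ0 hβ hs ht
  calc ∫⁻ s in Set.Ioo (0:ℝ) 1, ∫⁻ t in Set.Ioo (0:ℝ) 1,
        ENNReal.ofReal ((s ^ (-β) - t ^ (-β)) ^ 2 / |s - t| ^ (1 + 2 * β))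
      ≤ I * (2 * I) + I * (2 * I) := main.trans (add_le_add termA termB)
    _ < ⊤ := by finiteness
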